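/- With the line-search step sizes ρ_t = min{ μ·gap(x_{t−1}, y_{t−1})/R² , 1 }, for every t ≥ 1 the generalized conditional gradient iterates satisfy g_dual(y_*) − g_dual(y_t) ≤ 2R²/(μ(t+3)). -/

import Mathlib

open scoped RealInnerProductSpace
open Finset

noncomputable section

/-- `y` is a subgradient of `f` at `z`. -/
def IsSubgrad {n : ℕ} (f : EuclideanSpace ℝ (Fin n) → ℝ)
    (z y : EuclideanSpace ℝ (Fin n)) : Prop :=
  ∀ z', f z + ⟪y, z' - z⟫ ≤ f z'

/-- Dual objective `g_dual(y) = -h*(-Aᵀy) - f*(y)`, expressed via the conjugate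
function values `hstar` of `h` and `fstar` of `f`. -/
def gDual {p n : ℕ} (A : EuclideanSpace ℝ (Fin p) →L[ℝ] EuclideanSpace ℝ (Fin n))
    (hstar : EuclideanSpace ℝ (Fin p) → ℝ) (fstar : EuclideanSpace ℝ (Fin n) → ℝ)
    (y : EuclideanSpace ℝ (Fin n)) : ℝ :=
  -hstar (-((ContinuousLinearMap.adjoint A) y)) - fstar y

/-- Duality gap `gap(x,y) = (h(x) + f(Ax)) - g_dual(y)`. -/
def dualityGap {p n : ℕ} (A : EuclideanSpace ℝ (Fin p) →L[ℝ] EuclideanSpace ℝ (Fin n))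
    (f : EuclideanSpace ℝ (Fin n) → ℝ) (h : EuclideanSpace ℝ (Fin p) → ℝ)
    (hstar : EuclideanSpace ℝ (Fin p) → ℝ) (fstar : EuclideanSpace ℝ (Fin n) → ℝ)
    (x : EuclideanSpace ℝ (Fin p)) (y : EuclideanSpace ℝ (Fin n)) : ℝ :=
  (h x + f (A x)) - gDual A hstar fstar y

lemma exists_subgrad {n : ℕ} (f : EuclideanSpace ℝ (Fin n) → ℝ)
    (hf : ConvexOn ℝ Set.univ f) (hcont : Continuous f)
    (w : EuclideanSpace ℝ (Fin n)) : ∃ s, IsSubgrad f w s := by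
  set S : Set (EuclideanSpace ℝ (Fin n) × ℝ) := {q | f q.1 < q.2} with hS
  have hSopen : IsOpen S := isOpen_lt (by fun_prop) continuous_snd
  have hSconv : Convex ℝ S := by
    intro q hq q' hq' a b ha hb hab
    simp only [hS, Set.mem_setOf_eq, Prod.fst_add, Prod.smul_fst, Prod.snd_add,
      Prod.smul_snd, smul_eq_mul] at *
    have h1 : f (a • q.1 + b • q'.1) ≤ a * f q.1 + b * f q'.1 := by
      simpa using hf.2 (Set.mem_univ q.1) (Set.mem_univ q'.1) ha hb hab
    rcases ha.eq_or_lt with rfl | ha'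
    · simp only [zero_mul, zero_add] at *
      have hb1 : b = 1 := by linarith
      subst hb1
      simpa using lt_of_le_of_lt (by simpa using h1) hq'
    · rcases hb.eq_or_lt with rfl | hb'
      · have ha1 : a = 1 := by linarith
        subst ha1
        simpa using lt_of_le_of_lt (by simpa using h1) hq
      · have : a * f q.1 + b * f q'.1 < a * q.2 + b * q'.2 := by
          have := mul_lt_mul_of_pos_left hq ha'
          have := mul_lt_mul_of_pos_left hq' hb'
          linarith
        linarith
  have hnot : (w, f w) ∉ S := by simp [hS]
  obtain ⟨ℓ, hℓ⟩ := geometric_hahn_banach_open_point hSconv hSopen hnot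
  set a : ℝ := ℓ (0, 1) with haa
  set φ : EuclideanSpace ℝ (Fin n) →L[ℝ] ℝ :=
    ℓ.comp (ContinuousLinearMap.inl ℝ (EuclideanSpace ℝ (Fin n)) ℝ) with hφ
  have hdec : ∀ v : EuclideanSpace ℝ (Fin n), ∀ r : ℝ, ℓ (v, r) = φ v + r * a := by
    intro v r
    have : (v, r) = (v, (0:ℝ)) + r • ((0:EuclideanSpace ℝ (Fin n)), (1:ℝ)) := by
      simp [Prod.ext_iff]
    rw [this, map_add, map_smul]
    simp [hφ, ContinuousLinearMap.inl, smul_eq_mul]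
    exact Or.inl haa.symm
  have hkey : ∀ v : EuclideanSpace ℝ (Fin n), ∀ r : ℝ,
      f v < r → φ v + r * a < φ w + f w * a := by
    intro v r hr
    have h1 := hℓ (v, r) (by simpa [hS] using hr)
    rw [hdec, hdec] at h1; exact h1
  have haneg : a < 0 := by
    have := hkey w (f w + 1) (by linarith)
    nlinarith
  have hane : a ≠ 0 := ne_of_lt haneg
  have hle : ∀ z' : EuclideanSpace ℝ (Fin n), φ z' + f z' * a ≤ φ w + f w * a := by
    intro z'
    by_contra hcon
    push_neg at hcon
    set δ : ℝ := (φ z' + f z' * a) - (φ w + f w * a) with hδ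
    have hδpos : 0 < δ := by linarith
    have hεpos : 0 < δ / (-2 * a) := by
      apply div_pos hδpos; linarith
    have := hkey z' (f z' + δ / (-2 * a)) (by linarith)
    have hx : (f z' + δ / (-2 * a)) * a = f z' * a - δ/2 := by
      field_simp
      ring
    rw [hx] at this
    linarith
  refine ⟨(InnerProductSpace.toDual ℝ (EuclideanSpace ℝ (Fin n))).symm ((-a⁻¹) • φ), ?_⟩
  intro z'
  have hinner : ⟪(InnerProductSpace.toDual ℝ (EuclideanSpace ℝ (Fin n))).symm ((-a⁻¹) • φ),
      z' - w⟫ = (-a⁻¹) * (φ z' - φ w) := by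
    rw [InnerProductSpace.toDual_symm_apply]
    simp only [ContinuousLinearMap.smul_apply, map_sub, smul_eq_mul]
    ring
  rw [hinner]
  have h1 := hle z'
  have hpos : (0:ℝ) < -a⁻¹ := neg_pos.mpr (inv_lt_zero.mpr haneg)
  have h2 : 0 ≤ (-a⁻¹) * ((φ w + f w * a) - (φ z' + f z' * a)) :=
    mul_nonneg hpos.le (sub_nonneg.mpr h1)
  have h3 : (-a⁻¹) * ((φ w + f w * a) - (φ z' + f z' * a))
      = (f z' - f w) - (-a⁻¹) * (φ z' - φ w) := by
    field_simp
    ring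
  linarith [h3 ▸ h2]

lemma strong_min {q : ℕ} (μ : ℝ) (hμ : 0 < μ) (h : EuclideanSpace ℝ (Fin q) → ℝ)
    (hsc : StrongConvexOn Set.univ μ h)
    (z xx : EuclideanSpace ℝ (Fin q))
    (pmin : ∀ x', h xx - ⟪z, xx⟫ ≤ h x' - ⟪z, x'⟫) :
    ∀ x', h xx - ⟪z, xx⟫ + μ/2 * ‖x' - xx‖^2 ≤ h x' - ⟪z, x'⟫ := by
  intro x'
  set c : ℝ := ‖x' - xx‖^2 with hc
  have hc0 : 0 ≤ c := by positivity
  by_contra hcon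
  push_neg at hcon
  set Pm : ℝ := h xx - ⟪z, xx⟫ with hPm
  set Px : ℝ := h x' - ⟪z, x'⟫ with hPx
  set ε : ℝ := (Pm + μ/2 * c) - Px with hε
  have hεpos : 0 < ε := by simp only [hε]; linarith
  clear_value Pm Px ε
  have hcpos : 0 < c := by
    rcases hc0.eq_or_lt with hc' | hc'
    · exfalso; have := pmin x'; simp only [hε, ← hc'] at hεpos; linarith
    · exact hc'
  set b : ℝ := min 1 (ε / (μ * c)) with hb
  have hbpos : 0 < b := lt_min one_pos (div_pos hεpos (by positivity))
  have hb1 : b ≤ 1 := min_le_left _ _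
  have hble : b ≤ ε / (μ * c) := min_le_right _ _
  have ha0 : (0:ℝ) ≤ 1 - b := by linarith
  clear_value b
  have hscin := hsc.2 (Set.mem_univ xx) (Set.mem_univ x') ha0 hbpos.le (by ring)
  have hnorm : ‖xx - x'‖ = ‖x' - xx‖ := norm_sub_rev _ _
  have hinner : ⟪z, (1-b) • xx + b • x'⟫ = (1-b) * ⟪z, xx⟫ + b * ⟪z, x'⟫ := by
    rw [inner_add_right, real_inner_smul_right, real_inner_smul_right]
  have hpm := pmin ((1-b) • xx + b • x')
  rw [hinner] at hpm
  simp only [smul_eq_mul, hnorm, ← hc] at hscin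
  have hcomb : b * (Pm + (1-b)*(μ/2*c)) ≤ b * Px := by
    simp only [hPm, hPx]; nlinarith [hpm, hscin]
  have hdiv : Pm + (1-b)*(μ/2*c) ≤ Px := le_of_mul_le_mul_left hcomb hbpos
  have hfin : b * (μ/2*c) ≤ ε/2 := by
    have h2 : b * (μ * c) ≤ ε := by
      calc b * (μ * c) ≤ (ε / (μ * c)) * (μ * c) :=
            mul_le_mul_of_nonneg_right hble (by positivity)
        _ = ε := by field_simp
    calc b * (μ/2*c) = (b*(μ*c))/2 := by ring
      _ ≤ ε/2 := by linarith
  linarith [hε ▸ hεpos]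

lemma hstar_smooth {q : ℕ} (μ : ℝ) (hμ : 0 < μ) (h : EuclideanSpace ℝ (Fin q) → ℝ)
    (hsc : StrongConvexOn Set.univ μ h)
    (hstar : EuclideanSpace ℝ (Fin q) → ℝ)
    (hstar' : EuclideanSpace ℝ (Fin q) → EuclideanSpace ℝ (Fin q))
    (hub : ∀ z x', ⟪z, x'⟫ - h x' ≤ hstar z)
    (heq : ∀ z, ⟪z, hstar' z⟫ - h (hstar' z) = hstar z) :
    ∀ z z', hstar z' ≤ hstar z + ⟪z' - z, hstar' z⟫ + ‖z' - z‖^2 / (2*μ) := by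
  intro z z'
  set xx := hstar' z with hxx
  set x2 := hstar' z' with hx2
  have pmin : ∀ x', h xx - ⟪z, xx⟫ ≤ h x' - ⟪z, x'⟫ := by
    intro x'
    have h1 := hub z x'
    have h2 := heq z
    linarith
  have hsm := strong_min μ hμ h hsc z xx pmin x2
  have he' := heq z'
  have he := heq z
  have hsplit : ⟪z' - z, x2⟫ = ⟪z' - z, xx⟫ + ⟪z' - z, x2 - xx⟫ := by
    rw [← inner_add_right]; congr 1; abel
  have hcs : ⟪z' - z, x2 - xx⟫ ≤ ‖z' - z‖ * ‖x2 - xx‖ := real_inner_le_norm _ _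
  have hquad : ‖z' - z‖ * ‖x2 - xx‖ - μ/2 * ‖x2 - xx‖^2 ≤ ‖z' - z‖^2 / (2*μ) := by
    rw [le_div_iff₀ (by positivity : (0:ℝ) < 2*μ)]
    nlinarith [sq_nonneg (‖z' - z‖ - μ * ‖x2 - xx‖)]
  have hz'xz : ⟪z', x2⟫ - ⟪z, x2⟫ = ⟪z' - z, x2⟫ := by rw [← inner_sub_left]
  have hzx : ⟪z', xx⟫ - ⟪z, xx⟫ = ⟪z' - z, xx⟫ := by rw [← inner_sub_left]
  linarith [hsm, hcs, hquad]

lemma arithA (K u v : ℝ) (hK : 0 < K) (hu : 0 ≤ u) (huv : u ≤ v) (hvK : v ≤ K) :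
    u - u^2/(2*K) ≤ v - v^2/(2*K) := by
  have h1 : v^2 - u^2 ≤ (v - u)*(2*K) := by nlinarith
  have h2 : (v^2 - u^2)/(2*K) ≤ v - u := by
    rw [div_le_iff₀ (by positivity)]; linarith
  have h3 : (v^2 - u^2)/(2*K) = v^2/(2*K) - u^2/(2*K) := by ring
  linarith

lemma arithB (K v : ℝ) (hK : 0 < K) (hv : 0 ≤ v) (hvK : v ≤ K) :
    v - v^2/(2*K) ≤ K/2 := by
  have e : v^2/(2*K)*(2*K) = v^2 := by field_simp
  nlinarith [sq_nonneg (K - v)]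

lemma arithC (K : ℝ) (s : ℝ) (hK : 0 < K) (hs : 3 ≤ s) :
    (2*K/s) - (2*K/s)^2/(2*K) ≤ 2*K/(s+1) := by
  have hs0 : (0:ℝ) < s := by linarith
  have h1 : (2*K/s)^2/(2*K) = 2*K/s^2 := by field_simp
  rw [h1]
  have h2 : 2*K/s - 2*K/s^2 = 2*K*(s-1)/s^2 := by field_simp
  rw [h2, div_le_div_iff₀ (by positivity) (by positivity)]
  nlinarith

set_option maxHeartbeats 1000000 in
/-- Convergence of generalized conditional gradient with line search: dual suboptimality. -/
theorem cg_thm_9 {p n : ℕ}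
    (A : EuclideanSpace ℝ (Fin p) →L[ℝ] EuclideanSpace ℝ (Fin n))
    (f : EuclideanSpace ℝ (Fin n) → ℝ)
    (hf : ConvexOn ℝ Set.univ f)
    (B : NNReal) (hlip : LipschitzWith B f)
    (μ : ℝ) (hμ : 0 < μ)
    (h : EuclideanSpace ℝ (Fin p) → ℝ)
    (hhdiff : Differentiable ℝ h)
    (hsc : StrongConvexOn Set.univ μ h)
    (C : Set (EuclideanSpace ℝ (Fin n)))
    (fstar : EuclideanSpace ℝ (Fin n) → ℝ)
    (hC : ∀ y, y ∈ C ↔ BddAbove (Set.range fun z => ⟪y, z⟫ - f z))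
    (hfstar : ∀ y ∈ C, IsLUB (Set.range fun z => ⟪y, z⟫ - f z) (fstar y))
    (hstar : EuclideanSpace ℝ (Fin p) → ℝ)
    (hstar' : EuclideanSpace ℝ (Fin p) → EuclideanSpace ℝ (Fin p))
    (hhstar_ub : ∀ z x', ⟪z, x'⟫ - h x' ≤ hstar z)
    (hhstar_eq : ∀ z, ⟪z, hstar' z⟫ - h (hstar' z) = hstar z)
    (hhstar_uniq : ∀ z x', ⟪z, x'⟫ - h x' = hstar z → x' = hstar' z)
    (x : ℕ → EuclideanSpace ℝ (Fin p))
    (y : ℕ → EuclideanSpace ℝ (Fin n))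
    (ybar : ℕ → EuclideanSpace ℝ (Fin n))
    (ρ : ℕ → ℝ)
    (hρmem : ∀ t, 1 ≤ t → 0 ≤ ρ t ∧ ρ t ≤ 1)
    (hy0 : y 0 ∈ C)
    (hx : ∀ t, x t = hstar' (-((ContinuousLinearMap.adjoint A) (y t))))
    (hybar : ∀ t, ybar t ∈ C ∧ ∀ y' ∈ C,
      ⟪y', A (x t)⟫ - fstar y' ≤ ⟪ybar t, A (x t)⟫ - fstar (ybar t))
    (hrec : ∀ t, 1 ≤ t → y t = (1 - ρ t) • y (t - 1) + ρ t • ybar (t - 1))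
    (R : ℝ) (hR0 : 0 < R)
    (hR : ∀ y₁ ∈ C, ∀ y₂ ∈ C, ‖(ContinuousLinearMap.adjoint A) (y₁ - y₂)‖ ≤ R)
    (hρ : ∀ t, 1 ≤ t → ρ t =
      min (μ * dualityGap A f h hstar fstar (x (t - 1)) (y (t - 1)) / R ^ 2) 1)
    (ys : EuclideanSpace ℝ (Fin n)) (hysC : ys ∈ C)
    (hys : ∀ y' ∈ C, gDual A hstar fstar y' ≤ gDual A hstar fstar ys)
    :
    ∀ t : ℕ, 1 ≤ t →
      gDual A hstar fstar ys - gDual A hstar fstar (y t) ≤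
        2 * R ^ 2 / (μ * ((t : ℝ) + 3)) := by
  have hRne : R ≠ 0 := ne_of_gt hR0
  have hμne : μ ≠ 0 := ne_of_gt hμ
  set K : ℝ := R^2/μ with hK
  have hKpos : 0 < K := by positivity
  set g : EuclideanSpace ℝ (Fin n) → ℝ := gDual A hstar fstar with hg
  set G : ℕ → ℝ := fun t => dualityGap A f h hstar fstar (x t) (y t) with hG
  -- fstar upper bound property
  have fstar_ub : ∀ y' ∈ C, ∀ zz, ⟪y', zz⟫ - f zz ≤ fstar y' := by
    intro y' hy' zz
    exact (hfstar y' hy').1 ⟨zz, rfl⟩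
  -- attainment of the biconjugate via a subgradient
  have attain : ∀ w, ∃ y₀ ∈ C, ⟪y₀, w⟫ - fstar y₀ = f w := by
    intro w
    obtain ⟨s, hs⟩ := exists_subgrad f hf hlip.continuous w
    have hub : ∀ r ∈ Set.range (fun z => ⟪s, z⟫ - f z), r ≤ ⟪s, w⟫ - f w := by
      rintro r ⟨zz, rfl⟩
      have h1 := hs zz
      have h2 : ⟪s, zz - w⟫ = ⟪s, zz⟫ - ⟪s, w⟫ := inner_sub_right _ _ _
      simp only []
      linarith
    have hmem : s ∈ C := (hC s).mpr ⟨⟪s, w⟫ - f w, hub⟩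
    have hle1 : fstar s ≤ ⟪s, w⟫ - f w := (hfstar s hmem).2 hub
    have hle2 : ⟪s, w⟫ - f w ≤ fstar s := fstar_ub s hmem w
    exact ⟨s, hmem, by linarith⟩
  -- convex combinations stay in C and fstar is convex
  have hcomb : ∀ y₁ ∈ C, ∀ y₂ ∈ C, ∀ ρ' : ℝ, 0 ≤ ρ' → ρ' ≤ 1 →
      ((1-ρ') • y₁ + ρ' • y₂ ∈ C ∧
        fstar ((1-ρ') • y₁ + ρ' • y₂) ≤ (1-ρ') * fstar y₁ + ρ' * fstar y₂) := by
    intro y₁ h₁ y₂ h₂ ρ' hρ0 hρ1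
    have hub : ∀ r ∈ Set.range (fun z => ⟪(1-ρ') • y₁ + ρ' • y₂, z⟫ - f z),
        r ≤ (1-ρ') * fstar y₁ + ρ' * fstar y₂ := by
      rintro r ⟨zz, rfl⟩
      have e : ⟪(1-ρ') • y₁ + ρ' • y₂, zz⟫ = (1-ρ') * ⟪y₁, zz⟫ + ρ' * ⟪y₂, zz⟫ := by
        rw [inner_add_left, real_inner_smul_left, real_inner_smul_left]
      have b₁ : (1-ρ') * (⟪y₁, zz⟫ - f zz) ≤ (1-ρ') * fstar y₁ :=
        mul_le_mul_of_nonneg_left (fstar_ub y₁ h₁ zz) (by linarith)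
      have b₂ : ρ' * (⟪y₂, zz⟫ - f zz) ≤ ρ' * fstar y₂ :=
        mul_le_mul_of_nonneg_left (fstar_ub y₂ h₂ zz) hρ0
      simp only []
      nlinarith [e]
    have hmem : (1-ρ') • y₁ + ρ' • y₂ ∈ C := (hC _).mpr ⟨_, hub⟩
    exact ⟨hmem, (hfstar _ hmem).2 hub⟩
  -- weak duality
  have weakdual : ∀ y' ∈ C, ∀ xx, g y' ≤ h xx + f (A xx) := by
    intro y' hy' xx
    have h1 : ⟪-((ContinuousLinearMap.adjoint A) y'), xx⟫ - h xx
        ≤ hstar (-((ContinuousLinearMap.adjoint A) y')) := hhstar_ub _ xx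
    have h2 : ⟪-((ContinuousLinearMap.adjoint A) y'), xx⟫ = -⟪y', A xx⟫ := by
      rw [inner_neg_left, ContinuousLinearMap.adjoint_inner_left]
    have h3 : ⟪y', A xx⟫ - f (A xx) ≤ fstar y' := fstar_ub y' hy' (A xx)
    simp only [hg, gDual]
    linarith [h2 ▸ h1]
  -- membership of iterates
  have mem : ∀ t, y t ∈ C := by
    intro t
    induction t with
    | zero => exact hy0
    | succ t ih =>
      have h1 := hrec (t+1) (Nat.le_add_left 1 t)
      simp only [Nat.add_sub_cancel] at h1
      obtain ⟨h0, h1'⟩ := hρmem (t+1) (Nat.le_add_left 1 t)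
      rw [h1]
      exact (hcomb _ ih _ (hybar t).1 _ h0 h1').1
  -- nonnegativity and gap domination
  have Δnn : ∀ t, 0 ≤ g ys - g (y t) := fun t => sub_nonneg.mpr (hys (y t) (mem t))
  have GΔ : ∀ t, g ys - g (y t) ≤ G t := by
    intro t
    have := weakdual ys hysC (x t)
    simp only [hG, dualityGap]
    linarith
  have Gnn : ∀ t, 0 ≤ G t := fun t => le_trans (Δnn t) (GΔ t)
  -- the descent step
  have step : ∀ t : ℕ,
      g (y t) + ρ (t+1) * G t - (ρ (t+1))^2 * (K/2) ≤ g (y (t+1)) := by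
    intro t
    obtain ⟨hρ0, hρ1⟩ := hρmem (t+1) (Nat.le_add_left 1 t)
    have hyrec : y (t+1) = (1 - ρ (t+1)) • y t + ρ (t+1) • ybar t := by
      have h1 := hrec (t+1) (Nat.le_add_left 1 t)
      simpa using h1
    have memt := mem t
    have memb := (hybar t).1
    -- fstar convexity along the segment
    have hfs : fstar (y (t+1)) ≤ (1 - ρ (t+1)) * fstar (y t) + ρ (t+1) * fstar (ybar t) := by
      rw [hyrec]; exact (hcomb _ memt _ memb _ hρ0 hρ1).2
    -- smoothness of hstar
    have hsm := hstar_smooth μ hμ h hsc hstar hstar' hhstar_ub hhstar_eq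
      (-((ContinuousLinearMap.adjoint A) (y t))) (-((ContinuousLinearMap.adjoint A) (y (t+1))))
    rw [← hx t] at hsm
    have e1 : y t - y (t+1) = ρ (t+1) • (y t - ybar t) := by
      rw [hyrec]; module
    have hdiff2 : (-((ContinuousLinearMap.adjoint A) (y (t+1))))
        - (-((ContinuousLinearMap.adjoint A) (y t)))
        = ρ (t+1) • ((ContinuousLinearMap.adjoint A) (y t - ybar t)) := by
      calc (-((ContinuousLinearMap.adjoint A) (y (t+1))))
            - (-((ContinuousLinearMap.adjoint A) (y t)))
          = (ContinuousLinearMap.adjoint A) (y t - y (t+1)) := by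
            rw [map_sub]; abel
        _ = ρ (t+1) • ((ContinuousLinearMap.adjoint A) (y t - ybar t)) := by
            rw [e1, map_smul]
    have hip : ⟪(-((ContinuousLinearMap.adjoint A) (y (t+1))))
        - (-((ContinuousLinearMap.adjoint A) (y t))), x t⟫
        = ρ (t+1) * ⟪y t - ybar t, A (x t)⟫ := by
      rw [hdiff2, real_inner_smul_left, ContinuousLinearMap.adjoint_inner_left]
    have hnrm : ‖(-((ContinuousLinearMap.adjoint A) (y (t+1))))
        - (-((ContinuousLinearMap.adjoint A) (y t)))‖^2 ≤ (ρ (t+1))^2 * R^2 := by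
      rw [hdiff2, norm_smul, Real.norm_eq_abs, abs_of_nonneg hρ0, mul_pow]
      have hRb := hR (y t) memt (ybar t) memb
      gcongr
    have hsm2 : hstar (-((ContinuousLinearMap.adjoint A) (y (t+1))))
        ≤ hstar (-((ContinuousLinearMap.adjoint A) (y t)))
          + ρ (t+1) * ⟪y t - ybar t, A (x t)⟫ + (ρ (t+1))^2 * (K/2) := by
      rw [hip] at hsm
      have hd2 : ‖(-((ContinuousLinearMap.adjoint A) (y (t+1))))
          - (-((ContinuousLinearMap.adjoint A) (y t)))‖^2 / (2*μ)
          ≤ ((ρ (t+1))^2 * R^2) / (2*μ) :=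
        (div_le_div_iff_of_pos_right (by positivity)).mpr hnrm
      have eK : ((ρ (t+1))^2 * R^2) / (2*μ) = (ρ (t+1))^2 * (K/2) := by
        rw [hK]; ring
      linarith
    -- Fenchel equality at x t
    have hfen : ⟪-((ContinuousLinearMap.adjoint A) (y t)), x t⟫ - h (x t)
        = hstar (-((ContinuousLinearMap.adjoint A) (y t))) := by
      rw [hx t]; exact hhstar_eq _
    have hfen2 : ⟪-((ContinuousLinearMap.adjoint A) (y t)), x t⟫ = -⟪y t, A (x t)⟫ := by
      rw [inner_neg_left, ContinuousLinearMap.adjoint_inner_left]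
    -- linearized gap dominates the duality gap
    obtain ⟨y₀, hy₀C, hy₀⟩ := attain (A (x t))
    have hbr0 : f (A (x t)) ≤ ⟪ybar t, A (x t)⟫ - fstar (ybar t) := by
      rw [← hy₀]; exact (hybar t).2 y₀ hy₀C
    have hbr : G t ≤ ⟪ybar t - y t, A (x t)⟫ + fstar (y t) - fstar (ybar t) := by
      simp only [hG, dualityGap, gDual]
      have e : ⟪ybar t - y t, A (x t)⟫ = ⟪ybar t, A (x t)⟫ - ⟪y t, A (x t)⟫ := by
        rw [inner_sub_left]
      linarith [hbr0, hfen, hfen2, e]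
    have hmul : ρ (t+1) * G t
        ≤ ρ (t+1) * (⟪ybar t - y t, A (x t)⟫ + fstar (y t) - fstar (ybar t)) :=
      mul_le_mul_of_nonneg_left hbr hρ0
    -- expansions needed by linarith
    have hexp1 : ρ (t+1) * (⟪ybar t - y t, A (x t)⟫ + fstar (y t) - fstar (ybar t))
        = ρ (t+1) * ⟪ybar t - y t, A (x t)⟫ + ρ (t+1) * fstar (y t)
          - ρ (t+1) * fstar (ybar t) := by ring
    have hexp2 : (1 - ρ (t+1)) * fstar (y t) = fstar (y t) - ρ (t+1) * fstar (y t) := by ring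
    have esign : ρ (t+1) * ⟪y t - ybar t, A (x t)⟫
        = -(ρ (t+1) * ⟪ybar t - y t, A (x t)⟫) := by
      have e : ⟪y t - ybar t, A (x t)⟫ = -⟪ybar t - y t, A (x t)⟫ := by
        rw [← inner_neg_left]; congr 1; abel
      rw [e]; ring
    simp only [hg, gDual]
    linarith [hsm2, hfs, hmul, hexp1, hexp2, esign]
  -- step size value
  have hρval : ∀ t : ℕ, ρ (t+1) = min (G t / K) 1 := by
    intro t
    have h1 := hρ (t+1) (Nat.le_add_left 1 t)
    simp only [Nat.add_sub_cancel] at h1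
    rw [h1]
    congr 1
    simp only [hG, hK]
    field_simp
  -- per-iteration contraction, two cases
  have key : ∀ t : ℕ,
      (G t ≤ K ∧ g ys - g (y (t+1)) ≤ (g ys - g (y t)) - (G t)^2/(2*K)) ∨
      (K ≤ G t ∧ g ys - g (y (t+1)) ≤ (g ys - g (y t)) - G t + K/2) := by
    intro t
    rcases le_total (G t) K with hc | hc
    · left
      refine ⟨hc, ?_⟩
      have hρeq : ρ (t+1) = G t / K := by
        rw [hρval t, min_eq_left (by rw [div_le_one hKpos]; exact hc)]
      have hs := step t
      rw [hρeq] at hs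
      have e : G t / K * G t - (G t / K)^2 * (K/2) = (G t)^2/(2*K) := by
        field_simp; ring
      linarith
    · right
      refine ⟨hc, ?_⟩
      have hρeq : ρ (t+1) = 1 := by
        rw [hρval t, min_eq_right (by rw [le_div_iff₀ hKpos]; linarith)]
      have hs := step t
      rw [hρeq] at hs
      linarith
  -- main induction
  have main : ∀ t : ℕ, 1 ≤ t → g ys - g (y t) ≤ 2*K/((t:ℝ)+3) := by
    intro t ht
    induction t, ht using Nat.le_induction with
    | base =>
      have e4 : 2*K/(((1:ℕ):ℝ)+3) = K/2 := by push_cast; ring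
      rw [e4]
      rcases key 0 with ⟨hc, hd⟩ | ⟨hc, hd⟩
      · have h1 : g ys - g (y 0) ≤ G 0 := GΔ 0
        have h2 := arithB K (G 0) hKpos (Gnn 0) hc
        have h3 : (g ys - g (y 0)) - (G 0)^2/(2*K) ≤ G 0 - (G 0)^2/(2*K) := by linarith
        linarith
      · linarith [GΔ 0]
    | succ t ht ih =>
      have htR : (1:ℝ) ≤ (t:ℝ) := by exact_mod_cast ht
      have e4 : (((t+1:ℕ)):ℝ) + 3 = ((t:ℝ)+3) + 1 := by push_cast; ring
      rw [e4]
      rcases key t with ⟨hc, hd⟩ | ⟨hc, hd⟩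
      · -- case ρ = G/K
        have h1 : (g ys - g (y t))^2 ≤ (G t)^2 :=
          pow_le_pow_left₀ (Δnn t) (GΔ t) 2
        have h2 : (g ys - g (y t))^2/(2*K) ≤ (G t)^2/(2*K) := by gcongr
        have hVK : 2*K/((t:ℝ)+3) ≤ K := by
          rw [div_le_iff₀ (by linarith : (0:ℝ) < (t:ℝ)+3)]
          nlinarith
        have h3 := arithA K (g ys - g (y t)) (2*K/((t:ℝ)+3)) hKpos (Δnn t) ih hVK
        have h4 := arithC K ((t:ℝ)+3) hKpos (by linarith)
        linarith
      · -- case ρ = 1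
        have h5 : 2*K/((t:ℝ)+3) ≤ 2*K/4 := by
          gcongr
          linarith
        have h6 : (0:ℝ) ≤ 2*K/(((t:ℝ)+3)+1) := by positivity
        linarith
  intro t ht
  have h1 := main t ht
  have h2 : 2*K/((t:ℝ)+3) = 2*R^2/(μ*((t:ℝ)+3)) := by
    have : ((t:ℝ)+3) ≠ 0 := by positivity
    rw [hK]; field_simp
  simp only [hg] at h1
  linarith [h2 ▸ h1]
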